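/- For every n ≥ 1, the formula α^n := φ0 ∧ □^{≤n}(φ1 ∧ φ2 ∧ ◇⊤) (with φ0, φ1, φ2 as in the context) is satisfiable in an increasing domain model. Moreover, for every increasing domain model M and world r with M,r ⊨ α^n, for every 0 ≤ j < n: there exists a world at distance j from r, and for every world w at distance j from r there exists an injection f_w : Σ^n_j → δ(w) such that whenever f_w(s) = d, for every 0 ≤ k < n: the k-th bit of s equals 1 if and only if d ∈ ρ(u, P_k) for every R-successor u of w. -/

import Mathlib

set_option maxHeartbeats 1000000

/-! ## Syntax of first-order modal logic (FOML)

Predicate symbols and variables are represented by natural numbers; an atom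
`atom p args` applies the predicate symbol `p` to the list of variables `args`
(the arity of `p` in this occurrence is the length of `args`). -/
inductive Formula : Type where
  | atom (p : ℕ) (args : List ℕ)
  | neg  (φ : Formula)
  | and  (φ ψ : Formula)
  | or   (φ ψ : Formula)
  | box  (φ : Formula)
  | dia  (φ : Formula)
  | ex   (x : ℕ) (φ : Formula)
  | all  (x : ℕ) (φ : Formula)
deriving DecidableEq

namespace Formula

def imp (φ ψ : Formula) : Formula := .or φ.neg ψ
def biimp (φ ψ : Formula) : Formula := .and (imp φ ψ) (imp ψ φ)
/-- a fixed tautology `⊤` -/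
def top : Formula := .or (.atom 0 []) (.neg (.atom 0 []))
/-- a fixed contradiction `⊥` -/
def bot : Formula := .and (.atom 0 []) (.neg (.atom 0 []))

end Formula

def bigAnd (l : List Formula) : Formula := l.foldr Formula.and Formula.top
def bigOr  (l : List Formula) : Formula := l.foldr Formula.or Formula.bot

/-! ## Semantics: Kripke structures with world-relative domains -/

structure Model where
  W : Type
  D : Type
  R : W → W → Prop
  dom : W → Set D
  ρ : W → ℕ → Set (List D)

/-- `M` is an increasing domain model: nonempty countable set of worlds, nonempty
countable domain, nonempty local domains that increase along the accessibility
relation, and interpretations of predicates at a world take values in the local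
domain of that world. -/
def Model.Increasing (M : Model) : Prop :=
  Nonempty M.W ∧ Nonempty M.D ∧ Countable M.W ∧ Countable M.D ∧
    (∀ w, (M.dom w).Nonempty) ∧
    (∀ w v, M.R w v → M.dom w ⊆ M.dom v) ∧
    (∀ w p l, l ∈ M.ρ w p → ∀ d ∈ l, d ∈ M.dom w)

def Model.sat (M : Model) : M.W → (ℕ → M.D) → Formula → Prop
  | w, σ, .atom p args => args.map σ ∈ M.ρ w p
  | w, σ, .neg φ => ¬ M.sat w σ φ
  | w, σ, .and φ ψ => M.sat w σ φ ∧ M.sat w σ ψ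
  | w, σ, .or φ ψ => M.sat w σ φ ∨ M.sat w σ ψ
  | w, σ, .box φ => ∀ v, M.R w v → M.sat v σ φ
  | w, σ, .dia φ => ∃ v, M.R w v ∧ M.sat v σ φ
  | w, σ, .ex x φ => ∃ d ∈ M.dom w, M.sat w (Function.update σ x d) φ
  | w, σ, .all x φ => ∀ d ∈ M.dom w, M.sat w (Function.update σ x d) φ

/-- the assignment `σ` is relevant at the world `w` -/
def Model.relevant (M : Model) (w : M.W) (σ : ℕ → M.D) : Prop := ∀ x, σ x ∈ M.dom w

/-- satisfiability over increasing domain models -/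
def Satisfiable (φ : Formula) : Prop :=
  ∃ (M : Model), M.Increasing ∧ ∃ (w : M.W) (σ : ℕ → M.D), M.relevant w σ ∧ M.sat w σ φ
/-! ## The ABEB formulas forcing exponentially many elements

Unary predicates `P_0, …, P_{n-1}` are the predicate symbols `0, …, n-1`;
variables: `x := 0` and `y_i := 1 + i`. -/

/-- the unary atom `P_i(x)` -/
def atomPU (i x : ℕ) : Formula := .atom i [x]

/-- `φ0 := ∃x □ ⋀_{0≤i<n} ¬P_i(x)` -/
def phiZero (n : ℕ) : Formula :=
  .ex 0 (.box (bigAnd ((List.range n).map fun i => .neg (atomPU i 0))))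

/-- `φ1 := ∀x □ ⋀_{0≤i<n} ((P_i(x) → □P_i(x)) ∧ (¬P_i(x) → □¬P_i(x)))` -/
def phiOne (n : ℕ) : Formula :=
  .all 0 (.box (bigAnd ((List.range n).map fun i =>
    .and ((atomPU i 0).imp (.box (atomPU i 0)))
      ((Formula.neg (atomPU i 0)).imp (.box (.neg (atomPU i 0)))))))

/-- `φ2 := ∀x □ ⋀_{0≤i<n} ( ¬P_i(x) → ∃y_i □( P_i(y_i) ∧ ⋀_{j≠i}(P_j(x) ↔ P_j(y_i)) ) )` -/
def phiTwo (n : ℕ) : Formula :=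
  .all 0 (.box (bigAnd ((List.range n).map fun i =>
    (Formula.neg (atomPU i 0)).imp
      (.ex (1 + i) (.box (.and (atomPU i (1 + i))
        (bigAnd (((List.range n).filter (fun j => decide (j ≠ i))).map fun j =>
          (atomPU j 0).biimp (atomPU j (1 + i))))))))))

/-- `□^{≤0}ψ := ⊤` and `□^{≤n}ψ := ψ ∧ □(□^{≤n-1}ψ)` -/
def boxLe : ℕ → Formula → Formula
  | 0, _ => .top
  | n + 1, ψ => .and ψ (.box (boxLe n ψ))

/-- `α^n := φ0 ∧ □^{≤n}(φ1 ∧ φ2 ∧ ◇⊤)` -/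
def alphaN (n : ℕ) : Formula :=
  .and (phiZero n) (boxLe n (.and (phiOne n) (.and (phiTwo n) (.dia .top))))

/-- `atDist M r j w` : there is a path of length `j` from `r` to `w` -/
def atDist (M : Model) (r : M.W) : ℕ → M.W → Prop
  | 0, w => w = r
  | j + 1, w => ∃ v, atDist M r j v ∧ M.R v w

/-- the number of `1`-bits of a binary string of length `n` -/
def onesCount {n : ℕ} (s : Fin n → Bool) : ℕ :=
  (Finset.univ.filter fun k => s k = true).card

/-! ### Auxiliary lemmas -/

lemma sat_top (M : Model) (w : M.W) (σ : ℕ → M.D) : M.sat w σ Formula.top := by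
  simp only [Formula.top, Model.sat]
  tauto

lemma sat_bigAnd (M : Model) (w : M.W) (σ : ℕ → M.D) (l : List Formula) :
    M.sat w σ (bigAnd l) ↔ ∀ φ ∈ l, M.sat w σ φ := by
  induction l with
  | nil => simp [bigAnd, sat_top]
  | cons a l ih =>
    have : M.sat w σ (bigAnd (a :: l)) ↔ M.sat w σ a ∧ M.sat w σ (bigAnd l) := Iff.rfl
    rw [this, ih]
    simp

lemma sat_biimp (M : Model) (w : M.W) (σ : ℕ → M.D) (φ ψ : Formula) :
    M.sat w σ (Formula.biimp φ ψ) ↔ (M.sat w σ φ ↔ M.sat w σ ψ) := by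
  simp only [Formula.biimp, Formula.imp, Model.sat]
  tauto

lemma sat_phiZero_iff (M : Model) (n : ℕ) (w : M.W) (σ : ℕ → M.D) :
    M.sat w σ (phiZero n) ↔
      ∃ d ∈ M.dom w, ∀ v, M.R w v → ∀ i < n, [d] ∉ M.ρ v i := by
  simp only [phiZero, Model.sat, sat_bigAnd, List.mem_map, List.mem_range]
  constructor
  · rintro ⟨d, hd, h⟩
    refine ⟨d, hd, fun v hv i hi => ?_⟩
    have := h v hv _ ⟨i, hi, rfl⟩
    simpa [Model.sat, atomPU, Function.update] using this
  · rintro ⟨d, hd, h⟩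
    refine ⟨d, hd, fun v hv φ hφ => ?_⟩
    obtain ⟨i, hi, rfl⟩ := hφ
    simpa [Model.sat, atomPU, Function.update] using h v hv i hi

lemma sat_phiOne_iff (M : Model) (n : ℕ) (w : M.W) (σ : ℕ → M.D) :
    M.sat w σ (phiOne n) ↔
      ∀ d ∈ M.dom w, ∀ v, M.R w v → ∀ i < n,
        ([d] ∈ M.ρ v i → ∀ u, M.R v u → [d] ∈ M.ρ u i) ∧
        ([d] ∉ M.ρ v i → ∀ u, M.R v u → [d] ∉ M.ρ u i) := by
  simp only [phiOne, Model.sat, sat_bigAnd, List.mem_map, List.mem_range, Formula.imp]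
  constructor
  · intro h d hd v hv i hi
    have := h d hd v hv _ ⟨i, hi, rfl⟩
    simp only [Model.sat, atomPU, List.map, Function.update_self] at this
    tauto
  · intro h d hd v hv φ hφ
    obtain ⟨i, hi, rfl⟩ := hφ
    have := h d hd v hv i hi
    simp only [Model.sat, atomPU, List.map, Function.update_self]
    tauto

lemma sat_phiTwo_iff (M : Model) (n : ℕ) (w : M.W) (σ : ℕ → M.D) :
    M.sat w σ (phiTwo n) ↔
      ∀ d ∈ M.dom w, ∀ v, M.R w v → ∀ i < n, [d] ∉ M.ρ v i →
        ∃ e ∈ M.dom v, ∀ u, M.R v u → [e] ∈ M.ρ u i ∧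
          ∀ j < n, j ≠ i → ([d] ∈ M.ρ u j ↔ [e] ∈ M.ρ u j) := by
  have hupd : ∀ (d e : M.D) (i : ℕ),
      (Function.update (Function.update σ 0 d) (1 + i) e) 0 = d ∧
      (Function.update (Function.update σ 0 d) (1 + i) e) (1 + i) = e := by
    intro d e i
    constructor
    · rw [Function.update_of_ne (by omega), Function.update_self]
    · rw [Function.update_self]
  simp only [phiTwo, Model.sat, sat_bigAnd, List.mem_map, List.mem_range, Formula.imp]
  constructor
  · intro h d hd v hv i hi hni
    have := h d hd v hv _ ⟨i, hi, rfl⟩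
    simp only [Model.sat, atomPU, List.map, Function.update_self] at this
    rcases this with hc | ⟨e, he, hbox⟩
    · exact absurd hni (by simpa [Function.update] using hc)
    refine ⟨e, he, fun u hu => ?_⟩
    have hb := hbox u hu
    obtain ⟨h1, h2⟩ := hb
    obtain ⟨hu0, hu1⟩ := hupd d e i
    constructor
    · simpa [hu1] using h1
    · intro j hj hji
      have := (sat_bigAnd ..).mp h2 _ (by
        simp only [List.mem_map, List.mem_filter, List.mem_range]
        exact ⟨j, ⟨hj, by simpa using hji⟩, rfl⟩)
      rw [sat_biimp] at this
      simpa [Model.sat, atomPU, hu0, Function.update_self] using this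
  · intro h d hd v hv φ hφ
    obtain ⟨i, hi, rfl⟩ := hφ
    simp only [Model.sat, atomPU, List.map, Function.update_self]
    by_cases hni : [d] ∈ M.ρ v i
    · left
      simpa [Function.update] using hni
    right
    obtain ⟨e, he, hE⟩ := h d hd v hv i hi hni
    refine ⟨e, he, fun u hu => ?_⟩
    obtain ⟨h1, h2⟩ := hE u hu
    obtain ⟨hu0, hu1⟩ := hupd d e i
    refine ⟨by simpa [hu1] using h1, ?_⟩
    rw [sat_bigAnd]
    intro φ hφ
    simp only [List.mem_map, List.mem_filter, List.mem_range] at hφ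
    obtain ⟨j, ⟨hj, hji⟩, rfl⟩ := hφ
    rw [sat_biimp]
    simpa [Model.sat, atomPU, hu0, Function.update_self] using h2 j hj (by simpa using hji)

lemma sat_boxLe_atDist (M : Model) (σ : ℕ → M.D) (ψ : Formula) :
    ∀ (j n : ℕ) (r w : M.W), j < n → atDist M r j w →
      M.sat r σ (boxLe n ψ) → M.sat w σ (boxLe (n - j) ψ) := by
  intro j
  induction j with
  | zero =>
    intro n r w _ hw hb
    have : w = r := hw
    subst this
    simpa using hb
  | succ j ih =>
    intro n r w hn hw hb
    obtain ⟨v, hv, hR⟩ := hw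
    have h1 := ih n r v (by omega) hv hb
    have h2 : n - j = (n - (j + 1)) + 1 := by omega
    rw [h2] at h1
    have h1' : M.sat v σ ψ ∧ ∀ u, M.R v u → M.sat u σ (boxLe (n - (j + 1)) ψ) := h1
    exact h1'.2 w hR

lemma onesCount_eq_zero {n : ℕ} {s : Fin n → Bool} (h : onesCount s = 0) :
    ∀ k, s k = false := by
  intro k
  by_contra hk
  have hk' : s k = true := by revert hk; cases s k <;> simp
  have : k ∈ Finset.univ.filter fun k => s k = true := by simp [hk']
  rw [Finset.card_eq_zero.mp h] at this
  exact absurd this (Finset.notMem_empty k)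

lemma exists_true_of_onesCount_pos {n : ℕ} {s : Fin n → Bool} (h : 0 < onesCount s) :
    ∃ i, s i = true := by
  obtain ⟨i, hi⟩ := Finset.card_pos.mp h
  exact ⟨i, (Finset.mem_filter.mp hi).2⟩

lemma onesCount_update_false {n : ℕ} {s : Fin n → Bool} {i : Fin n} (hi : s i = true) :
    onesCount (Function.update s i false) = onesCount s - 1 := by
  have hset : (Finset.univ.filter fun k => Function.update s i false k = true) =
      (Finset.univ.filter fun k => s k = true).erase i := by
    ext k
    by_cases hk : k = i
    · subst hk; simp [Function.update_self]
    · simp [Function.update_of_ne hk, hk]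
  rw [onesCount, hset, Finset.card_erase_of_mem (by simp [hi])]
  rfl

lemma sat_boxLe_of_all (M : Model) (σ : ℕ → M.D) (ψ : Formula)
    (h : ∀ w, M.sat w σ ψ) : ∀ (m : ℕ) (w : M.W), M.sat w σ (boxLe m ψ) := by
  intro m
  induction m with
  | zero => exact fun w => sat_top M w σ
  | succ m ih => exact fun w => ⟨h w, fun v _ => ih v⟩

/-- the witness model for satisfiability of `α^n` -/
def M0 (n : ℕ) : Model where
  W := ℕ
  D := Fin n → Bool
  R := fun i j => j = i + 1
  dom := fun _ => Set.univ
  ρ := fun _ p => {l | ∃ s : Fin n → Bool, l = [s] ∧ ∃ h : p < n, s ⟨p, h⟩ = true}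

lemma M0_mem_iff (n : ℕ) (w : ℕ) (p : ℕ) (d : Fin n → Bool) :
    [d] ∈ (M0 n).ρ w p ↔ ∃ h : p < n, d ⟨p, h⟩ = true := by
  constructor
  · rintro ⟨s, hs, h, hh⟩
    obtain rfl : d = s := by injection hs
    exact ⟨h, hh⟩
  · rintro ⟨h, hh⟩
    exact ⟨d, rfl, h, hh⟩

/-- For every `n ≥ 1` the formula `α^n` is satisfiable in an
increasing domain model.  Moreover, whenever `M,r ⊨ α^n` in an increasing
domain model, then for every `0 ≤ j < n`: there is a world at distance `j` from
`r`, and for every world `w` at distance `j` from `r` there is an injection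
`f_w` from the binary strings of length `n` with at most `j` ones into `δ(w)`
such that whenever `f_w(s) = d`, for every `k < n`: the `k`-th bit of `s` is
`1` iff `d` satisfies `P_k` at every successor of `w`. -/
theorem alphaN_forces_exponential_domain (n : ℕ) (hn : 1 ≤ n) :
    (∃ M : Model, M.Increasing ∧
      ∃ (w : M.W) (σ : ℕ → M.D), M.relevant w σ ∧ M.sat w σ (alphaN n)) ∧
    (∀ M : Model, M.Increasing →
      ∀ (r : M.W) (σ : ℕ → M.D), M.relevant r σ → M.sat r σ (alphaN n) →
        ∀ j, j < n →
          (∃ w, atDist M r j w) ∧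
          (∀ w, atDist M r j w →
            ∃ f : (Fin n → Bool) → M.D,
              Set.InjOn f {s | onesCount s ≤ j} ∧
              ∀ s : Fin n → Bool, onesCount s ≤ j →
                f s ∈ M.dom w ∧
                ∀ k : Fin n,
                  (s k = true ↔ ∀ u, M.R w u → [f s] ∈ M.ρ u (k : ℕ)))) := by
  constructor
  · -- satisfiability in the model M0
    refine ⟨M0 n, ?_, (0 : ℕ), (fun _ => fun _ => false), fun _ => trivial, ?_, ?_⟩
    · exact ⟨⟨(0 : ℕ)⟩, ⟨fun _ => false⟩, (inferInstance : Countable ℕ),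
        (inferInstance : Countable (Fin n → Bool)),
        fun w => ⟨fun _ => false, trivial⟩,
        fun _ _ _ => subset_rfl,
        fun _ _ _ _ _ _ => trivial⟩
    · -- phiZero
      refine (sat_phiZero_iff (M0 n) n _ _).mpr ?_
      refine ⟨fun _ => false, trivial, fun v _ i _ => ?_⟩
      intro hmem
      obtain ⟨h, hh⟩ := (M0_mem_iff n v i _).mp hmem
      simp at hh
    · -- boxLe part
      apply sat_boxLe_of_all
      intro w
      refine ⟨?_, ?_, ?_⟩
      · refine (sat_phiOne_iff (M0 n) n _ _).mpr ?_
        intro d _ v _ i _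
        exact ⟨fun h u _ => h, fun h u _ => h⟩
      · refine (sat_phiTwo_iff (M0 n) n _ _).mpr ?_
        intro (d : Fin n → Bool) _ v _ i hi hni
        refine ⟨Function.update d ⟨i, hi⟩ true, trivial, fun u _ => ⟨?_, ?_⟩⟩
        · exact (M0_mem_iff n u i _).mpr ⟨hi, by simp⟩
        · intro j hj hji
          refine (M0_mem_iff n u j d).trans (Iff.trans ?_ (M0_mem_iff n u j _).symm)
          have hne : ∀ h : j < n, (⟨j, h⟩ : Fin n) ≠ ⟨i, hi⟩ := by
            intro h hc
            exact hji (by simpa [Fin.ext_iff] using hc)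
          constructor
          · rintro ⟨h, hh⟩
            exact ⟨h, by rw [Function.update_of_ne (hne h)]; exact hh⟩
          · rintro ⟨h, hh⟩
            exact ⟨h, by rwa [Function.update_of_ne (hne h)] at hh⟩
      · exact ⟨(show ℕ from w) + 1, rfl, sat_top _ _ _⟩
  · -- the forcing part
    intro M hM r σ hrel hsat j hj
    obtain ⟨hWne, hDne, hWc, hDc, hdomne, hinc, hρ⟩ := hM
    have hs1 : M.sat r σ (phiZero n) := hsat.1
    have hs2 : M.sat r σ (boxLe n (.and (phiOne n) (.and (phiTwo n) (.dia .top)))) := hsat.2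
    have hψ : ∀ j', j' < n → ∀ w, atDist M r j' w →
        M.sat w σ (phiOne n) ∧ M.sat w σ (phiTwo n) ∧ ∃ u, M.R w u := by
      intro j' hj' w hw
      have h1 := sat_boxLe_atDist M σ _ j' n r w hj' hw hs2
      have h2 : n - j' = (n - j' - 1) + 1 := by omega
      rw [h2] at h1
      have h1' : M.sat w σ (.and (phiOne n) (.and (phiTwo n) (.dia .top))) ∧
          ∀ u, M.R w u → M.sat u σ (boxLe (n - j' - 1)
            (.and (phiOne n) (.and (phiTwo n) (.dia .top)))) := h1
      have h1'' : M.sat w σ (phiOne n) ∧ M.sat w σ (phiTwo n) ∧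
          ∃ u, M.R w u ∧ M.sat u σ Formula.top := h1'.1
      exact ⟨h1''.1, h1''.2.1, h1''.2.2.imp fun u hu => hu.1⟩
    have key : ∀ j', j' < n → ∀ w, atDist M r j' w → ∀ s : Fin n → Bool, onesCount s ≤ j' →
        ∃ d ∈ M.dom w, ∀ (k : Fin n), ∀ u, M.R w u →
          ([d] ∈ M.ρ u (k : ℕ) ↔ s k = true) := by
      intro j'
      induction j' with
      | zero =>
        intro _ w hw s hs
        have hwr : w = r := hw
        subst hwr
        obtain ⟨d, hd, h0⟩ := (sat_phiZero_iff M n w σ).mp hs1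
        refine ⟨d, hd, fun k u hu => ?_⟩
        rw [onesCount_eq_zero (Nat.le_zero.mp hs) k]
        simp only [Bool.false_eq_true, iff_false]
        exact h0 u hu k k.isLt
      | succ j' ih =>
        intro hjn w hw s hs
        obtain ⟨v, hv, hRvw⟩ := hw
        have hψv := hψ j' (by omega) v hv
        have hP1 := (sat_phiOne_iff M n v σ).mp hψv.1
        by_cases hle : onesCount s ≤ j'
        · obtain ⟨d, hd, hH⟩ := ih (by omega) v hv s hle
          refine ⟨d, hinc v w hRvw hd, fun k u hu => ?_⟩
          have hpers := hP1 d hd w hRvw k k.isLt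
          have hw' := hH k w hRvw
          constructor
          · intro hmem
            by_contra hsk
            exact hpers.2 (fun h => hsk (hw'.mp h)) u hu hmem
          · intro hsk
            exact hpers.1 (hw'.mpr hsk) u hu
        · have hpos : 0 < onesCount s := by omega
          obtain ⟨i, hi⟩ := exists_true_of_onesCount_pos hpos
          have hcount : onesCount (Function.update s i false) ≤ j' := by
            rw [onesCount_update_false hi]; omega
          obtain ⟨d, hd, hH⟩ := ih (by omega) v hv (Function.update s i false) hcount
          have hnotw : [d] ∉ M.ρ w (i : ℕ) := by
            intro hmem
            have := (hH i w hRvw).mp hmem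
            simp at this
          have hP2 := (sat_phiTwo_iff M n v σ).mp hψv.2.1
          obtain ⟨e, he, hE⟩ := hP2 d hd w hRvw i i.isLt hnotw
          refine ⟨e, he, fun k u hu => ?_⟩
          obtain ⟨h1, h2⟩ := hE u hu
          by_cases hk : k = i
          · subst hk
            simp only [hi, iff_true]
            exact h1
          · have hki : (k : ℕ) ≠ (i : ℕ) := fun hc => hk (Fin.ext hc)
            have h2k := h2 k k.isLt hki
            have hw' := hH k w hRvw
            have hs'k : Function.update s i false k = s k := Function.update_of_ne hk _ _
            have hpers := hP1 d hd w hRvw k k.isLt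
            rw [← h2k, ← hs'k]
            constructor
            · intro hmem
              by_contra hsk
              exact hpers.2 (fun h => hsk (hw'.mp h)) u hu hmem
            · intro hsk
              exact hpers.1 (hw'.mpr hsk) u hu
    have hEx : ∀ j', j' < n → ∃ w, atDist M r j' w := by
      intro j'
      induction j' with
      | zero => exact fun _ => ⟨r, rfl⟩
      | succ j' ih =>
        intro h
        obtain ⟨w, hw⟩ := ih (by omega)
        obtain ⟨u, hu⟩ := (hψ j' (by omega) w hw).2.2
        exact ⟨u, w, hw, hu⟩
    refine ⟨hEx j hj, fun w hw => ?_⟩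
    obtain ⟨u0, hu0⟩ := (hψ j hj w hw).2.2
    have hall : ∀ s : Fin n → Bool, ∃ d, onesCount s ≤ j →
        d ∈ M.dom w ∧ ∀ (k : Fin n), ∀ u, M.R w u →
          ([d] ∈ M.ρ u (k : ℕ) ↔ s k = true) := by
      intro s
      by_cases h : onesCount s ≤ j
      · obtain ⟨d, hd, hh⟩ := key j hj w hw s h
        exact ⟨d, fun _ => ⟨hd, hh⟩⟩
      · obtain ⟨d0⟩ := hDne
        exact ⟨d0, fun h' => absurd h' h⟩
    choose f hf using hall
    refine ⟨f, ?_, ?_⟩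
    · intro s hs t ht hst
      have hiff : ∀ k, (s k = true ↔ t k = true) := by
        intro k
        rw [← (hf s hs).2 k u0 hu0, hst, (hf t ht).2 k u0 hu0]
      funext k
      have := hiff k
      cases hsk : s k <;> cases htk : t k
      · rfl
      · rw [hsk, htk] at this; simp at this
      · rw [hsk, htk] at this; simp at this
      · rfl
    · intro s hs
      obtain ⟨hdom, hprop⟩ := hf s hs
      refine ⟨hdom, fun k => ?_⟩
      constructor
      · intro hsk u hu
        exact (hprop k u hu).mpr hsk
      · intro hforall
        exact (hprop k u0 hu0).mp (hforall u0 hu0)
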